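/- Let W be a normed module over a unital normed ring, u ∈ W with ‖u‖ = 1, and let c(h), c(Ih), T₁ := c(t₁), T₂ := c(t₂) be Clifford multiplications by vectors h, Ih, t₁, t₂ in a real inner product space V, with h ⊥ Ih and ‖h‖ = ‖Ih‖. If T₁c(h)u + T₂c(Ih)u = 0 then ‖t₁‖‖h‖ = ‖t₂‖‖Ih‖, hence ‖t₁‖ = ‖t₂‖; and moreover multiplying by c(t₁)c(Ih) + c(t₂)c(h) yields ⟨t₁, t₂⟩ = 0. -/
import Mathlib

open scoped RealInnerProductSpace

theorem clifford_equation_forces_equal_norms_and_orthogonality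
    {V W : Type*} [NormedAddCommGroup V] [InnerProductSpace ℝ V]
    [NormedAddCommGroup W] [InnerProductSpace ℝ W] [FiniteDimensional ℝ W]
    (c : V → (W →ₗ[ℝ] W))
    (hClif : ∀ v w : V, c v ∘ₗ c w + c w ∘ₗ c v = (-2 * ⟪v, w⟫) • LinearMap.id)
    (hskew : ∀ v : V, LinearMap.adjoint (c v) = -(c v))
    (h h' t₁ t₂ : V)
    (hortho : ⟪h, h'⟫ = 0) (hnorm : ‖h‖ = ‖h'‖) (hh : h ≠ 0)
    (u : W) (hu : ‖u‖ = 1)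
    (heq : c t₁ (c h u) + c t₂ (c h' u) = 0) :
    ‖t₁‖ * ‖h‖ = ‖t₂‖ * ‖h'‖ ∧ ‖t₁‖ = ‖t₂‖ ∧ ⟪t₁, t₂⟫ = 0 := by
  have hanti : ∀ (v w : V) (x : W),
      c v (c w x) + c w (c v x) = (-2 * ⟪v, w⟫) • x := by
    intro v w x
    have := congrArg (fun f : W →ₗ[ℝ] W => f x) (hClif v w)
    simpa using this
  have hsq : ∀ (v : V) (x : W), c v (c v x) = (-⟪v, v⟫) • x := by
    intro v x
    have hvv := hanti v v x
    have h2 : (2 : ℝ) • c v (c v x) = (2 : ℝ) • ((-⟪v, v⟫) • x) := by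
      rw [two_smul, hvv, smul_smul]
      ring_nf
    exact smul_right_injective W two_ne_zero h2
  have hip : ∀ (v : V) (x y : W), ⟪c v x, y⟫ = -⟪x, c v y⟫ := by
    intro v x y
    rw [← LinearMap.adjoint_inner_left, hskew]
    simp
  have hipsq : ∀ (v : V) (x : W), ⟪c v x, c v x⟫ = ⟪v, v⟫ * ⟪x, x⟫ := by
    intro v x
    rw [hip, hsq]
    simp [real_inner_smul_right]
  have hnormc : ∀ (v : V) (x : W), ‖c v x‖ = ‖v‖ * ‖x‖ := by
    intro v x
    have hvx := hipsq v x
    rw [real_inner_self_eq_norm_mul_norm, real_inner_self_eq_norm_mul_norm,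
      real_inner_self_eq_norm_mul_norm] at hvx
    have h1 : (0:ℝ) ≤ ‖c v x‖ := norm_nonneg _
    have h2 : (0:ℝ) ≤ ‖v‖ * ‖x‖ := by positivity
    nlinarith
  have heq' : c t₁ (c h u) = -(c t₂ (c h' u)) :=
    eq_neg_of_add_eq_zero_left heq
  have hn1 : ‖t₁‖ * ‖h‖ = ‖t₂‖ * ‖h'‖ := by
    have hnn := congrArg norm heq'
    rw [norm_neg, hnormc, hnormc, hnormc, hnormc, hu] at hnn
    ring_nf at hnn ⊢
    linarith
  have hhn : ‖h‖ ≠ 0 := norm_ne_zero_iff.mpr hh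
  have hn2 : ‖t₁‖ = ‖t₂‖ := by
    rw [← hnorm] at hn1
    exact mul_right_cancel₀ hhn hn1
  refine ⟨hn1, hn2, ?_⟩
  -- ⟪c h' u, c h u⟫ = 0
  have hyz : ⟪c h' u, c h u⟫ = 0 := by
    have h0 : ⟪h', h⟫ = (0:ℝ) := by rw [real_inner_comm]; exact hortho
    have hc := hanti h' h u
    rw [h0] at hc
    simp only [mul_zero, zero_smul] at hc
    have hc' : c h' (c h u) = -(c h (c h' u)) := eq_neg_of_add_eq_zero_left hc
    have a1 : ⟪c h' u, c h u⟫ = ⟪u, c h (c h' u)⟫ := by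
      rw [hip h' u (c h u), hc']; simp
    have a2 : ⟪c h u, c h' u⟫ = -⟪u, c h (c h' u)⟫ := hip h u (c h' u)
    have a3 : ⟪c h' u, c h u⟫ = ⟪c h u, c h' u⟫ := real_inner_comm _ _
    linarith
  have stepA : ∀ x : W, ⟪c t₁ x, c t₂ x⟫ = ⟪t₁, t₂⟫ * ⟪x, x⟫ := by
    intro x
    have hA := hanti t₁ t₂ x
    have e1 : ⟪c t₁ x, c t₂ x⟫ = -⟪x, c t₁ (c t₂ x)⟫ := hip t₁ x _
    have e2 : ⟪c t₂ x, c t₁ x⟫ = -⟪x, c t₂ (c t₁ x)⟫ := hip t₂ x _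
    have e3 : ⟪x, c t₁ (c t₂ x) + c t₂ (c t₁ x)⟫ = -2 * ⟪t₁, t₂⟫ * ⟪x, x⟫ := by
      rw [hA, real_inner_smul_right]; try ring
    rw [inner_add_right] at e3
    have e4 : ⟪c t₂ x, c t₁ x⟫ = ⟪c t₁ x, c t₂ x⟫ := real_inner_comm _ _
    linarith
  have stepB : ⟪c t₁ (c h u), c t₂ (c h u)⟫ = 0 := by
    rw [heq', inner_neg_left, hip t₂ (c h' u) (c t₂ (c h u)), hsq t₂ (c h u),
      real_inner_smul_right, hyz]
    ring
  have hzz : ⟪c h u, c h u⟫ ≠ 0 := by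
    rw [hipsq h u, real_inner_self_eq_norm_mul_norm, real_inner_self_eq_norm_mul_norm, hu]
    simpa using hh
  have key := (stepA (c h u)).symm.trans stepB
  exact (mul_eq_zero.mp key).resolve_right hzz
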